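/- Let Q be a finitely additive probability on F admitting a localizing sequence for Q. Then P is weakly absolutely continuous with respect to Q: for every A ∈ F, Q(A) = 0 implies P(A) = 0. -/

import Mathlib

open MeasureTheory Filter
open scoped NNReal

/-- If `Q` is a finitely additive probability on `F = F_T` admitting a localizing
sequence for `Q`, then `P` is weakly absolutely continuous with respect to `Q`: for every
`A ∈ F`, `Q A = 0` implies `P A = 0`. -/
theorem weakly_absolutely_continuous_of_localizing
    {Ω : Type*} {m : MeasurableSpace Ω} (P : Measure Ω) [IsProbabilityMeasure P]
    (ℱ : Filtration ℝ≥0 m)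
    (T : Ω → ℝ≥0) (hT : IsStoppingTime ℱ (fun ω => (T ω : WithTop ℝ≥0)))
    (Q : Set Ω → ℝ)
    (hQ01 : ∀ A : Set Ω, MeasurableSet[hT.measurableSpace] A → 0 ≤ Q A ∧ Q A ≤ 1)
    (hQempty : Q ∅ = 0) (hQuniv : Q Set.univ = 1)
    (hQadd : ∀ A B : Set Ω, MeasurableSet[hT.measurableSpace] A →
      MeasurableSet[hT.measurableSpace] B → Disjoint A B → Q (A ∪ B) = Q A + Q B)
    -- a localizing sequence for Q:
    (τ : ℕ → Ω → ℝ≥0) (hτ : ∀ n, IsStoppingTime ℱ (fun ω => (τ n ω : WithTop ℝ≥0)))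
    (hτmono : ∀ n, τ n ≤ τ (n + 1))
    (hτT : Tendsto (fun n => P {ω | T ω ≤ τ n ω}) atTop (nhds 1))
    (ν : ∀ n : ℕ, @Measure Ω ((hτ n).measurableSpace))
    (hνQ : ∀ n, ∀ A : Set Ω, MeasurableSet[(hτ n).measurableSpace] A → Q A = (ν n A).toReal)
    (hνP : ∀ n, ∀ A : Set Ω, MeasurableSet[(hτ n).measurableSpace] A → (ν n A = 0 ↔ P A = 0)) :
    ∀ A : Set Ω, MeasurableSet[hT.measurableSpace] A → Q A = 0 → P A = 0 := by
  intro A hA hQA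
  -- set Bn := {ω | T ω ≤ τ n ω}
  have hBτ : ∀ n, MeasurableSet[(hτ n).measurableSpace] {ω | T ω ≤ τ n ω} := fun n =>
    by rw [show {ω | T ω ≤ τ n ω} = {ω | (T ω : WithTop ℝ≥0) ≤ τ n ω} from Set.ext fun ω => by simp only [Set.mem_setOf_eq]; exact WithTop.coe_le_coe.symm]; exact IsStoppingTime.measurableSet_stopping_time_le hT (hτ n)
  have hBT : ∀ n, MeasurableSet[hT.measurableSpace] {ω | T ω ≤ τ n ω} := fun n =>
    by rw [show {ω | T ω ≤ τ n ω} = {ω | (T ω : WithTop ℝ≥0) ≤ τ n ω} from Set.ext fun ω => by simp only [Set.mem_setOf_eq]; exact WithTop.coe_le_coe.symm]; exact IsStoppingTime.measurableSet_le_stopping_time hT (hτ n)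
  have hABmin : ∀ n, MeasurableSet[(hT.min (hτ n)).measurableSpace]
      (A ∩ {ω | T ω ≤ τ n ω}) := fun n =>
    by rw [show {ω | T ω ≤ τ n ω} = {ω | (T ω : WithTop ℝ≥0) ≤ τ n ω} from Set.ext fun ω => by simp only [Set.mem_setOf_eq]; exact WithTop.coe_le_coe.symm]; exact IsStoppingTime.measurableSet_inter_le hT (hτ n) A hA
  have hABτ : ∀ n, MeasurableSet[(hτ n).measurableSpace] (A ∩ {ω | T ω ≤ τ n ω}) := fun n =>
    ((IsStoppingTime.measurableSet_min_iff hT (hτ n) _).mp (hABmin n)).2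
  have hABT : ∀ n, MeasurableSet[hT.measurableSpace] (A ∩ {ω | T ω ≤ τ n ω}) := fun n =>
    ((IsStoppingTime.measurableSet_min_iff hT (hτ n) _).mp (hABmin n)).1
  -- Q (A ∩ Bn) = 0
  have hQAB : ∀ n, Q (A ∩ {ω | T ω ≤ τ n ω}) = 0 := by
    intro n
    have hsplit : Q A = Q (A ∩ {ω | T ω ≤ τ n ω}) + Q (A ∩ {ω | T ω ≤ τ n ω}ᶜ) := by
      have := hQadd (A ∩ {ω | T ω ≤ τ n ω}) (A ∩ {ω | T ω ≤ τ n ω}ᶜ) (hABT n)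
        (hA.inter (hBT n).compl)
        (Set.disjoint_of_subset Set.inter_subset_right Set.inter_subset_right
          disjoint_compl_right)
      rwa [Set.inter_union_compl] at this
    have h1 := (hQ01 _ (hABT n)).1
    have h2 := (hQ01 _ (hA.inter (hBT n).compl)).1
    linarith [hsplit, hQA]
  -- ν n univ is finite
  have hνfin : ∀ n, ν n Set.univ ≠ ⊤ := by
    intro n
    intro h
    have := hνQ n Set.univ MeasurableSet.univ
    rw [h, hQuniv] at this
    simp at this
  -- P (A ∩ Bn) = 0
  have hPAB : ∀ n, P (A ∩ {ω | T ω ≤ τ n ω}) = 0 := by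
    intro n
    refine (hνP n _ (hABτ n)).mp ?_
    have hle : ν n (A ∩ {ω | T ω ≤ τ n ω}) ≤ ν n Set.univ :=
      measure_mono (Set.subset_univ _)
    have hne : ν n (A ∩ {ω | T ω ≤ τ n ω}) ≠ ⊤ := fun h => hνfin n (top_le_iff.mp (h ▸ hle))
    have := hνQ n _ (hABτ n)
    rw [hQAB n] at this
    exact (ENNReal.toReal_eq_zero_iff _).mp this.symm |>.resolve_right hne
  -- P Bnᶜ → 0
  have hBm : ∀ n, MeasurableSet {ω | T ω ≤ τ n ω} := fun n =>
    (hτ n).measurableSpace_le _ (hBτ n)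
  have hcompl : Tendsto (fun n => P {ω | T ω ≤ τ n ω}ᶜ) atTop (nhds 0) := by
    have hsub : Tendsto (fun n => (1 : ENNReal) - P {ω | T ω ≤ τ n ω}) atTop (nhds (1 - 1)) :=
      ENNReal.Tendsto.sub tendsto_const_nhds hτT (Or.inl (by simp))
    simp only [tsub_self] at hsub
    refine hsub.congr fun n => ?_
    rw [measure_compl (hBm n) (measure_ne_top P _), measure_univ]
  -- conclude
  have hle : ∀ n, P A ≤ P {ω | T ω ≤ τ n ω}ᶜ := by
    intro n
    calc P A = P ((A ∩ {ω | T ω ≤ τ n ω}) ∪ (A ∩ {ω | T ω ≤ τ n ω}ᶜ)) := by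
          rw [Set.inter_union_compl]
      _ ≤ P (A ∩ {ω | T ω ≤ τ n ω}) + P (A ∩ {ω | T ω ≤ τ n ω}ᶜ) :=
          measure_union_le _ _
      _ ≤ P {ω | T ω ≤ τ n ω}ᶜ := by
          rw [hPAB n, zero_add]; exact measure_mono Set.inter_subset_right
  exact le_antisymm (ge_of_tendsto' hcompl hle) (zero_le')
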